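/- arXiv:1306.2294 — 2 statements merged into one kernel-verified Lean document; each statement's English description precedes it below -/
import Mathlib

section
/- Let κ > 0 and let f : ℝ → ℝ be differentiable with f′(v) ≥ κ(1 + v⁴) for all v ∈ ℝ. Then there exists β > 0 such that for all a, b ∈ ℝ: (f(a) − f(b))·(a − b) ≥ β·(1 + |a| + |b|)⁴·(a − b)². -/
lemma aux_pow4 (x y : ℝ) (hx : 0 ≤ x) (hy : 0 ≤ y) :
    (1 + x + y) ^ 4 ≤ 27 * (1 + x ^ 4 + y ^ 4) := by
  nlinarith [sq_nonneg (x - y), sq_nonneg (x - 1), sq_nonneg (y - 1),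
    sq_nonneg (x + y - 2), sq_nonneg (x*y - 1), sq_nonneg (x*y - x), sq_nonneg (x*y - y),
    mul_nonneg hx hy, sq_nonneg (x + y), mul_nonneg (mul_nonneg hx hy) hx,
    mul_nonneg (mul_nonneg hx hy) hy, sq_nonneg (x^2 - y^2), sq_nonneg (x^2 - 1),
    sq_nonneg (y^2 - 1)]

/-- If `f : ℝ → ℝ` is differentiable with `f'(v) ≥ κ(1 + v⁴)` for some `κ > 0`, then there
is `β > 0` with `(f(a) − f(b))(a − b) ≥ β(1 + |a| + |b|)⁴(a − b)²` for all `a, b`. -/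
theorem stmt8 (κ : ℝ) (hκ : 0 < κ) (f : ℝ → ℝ) (hf : Differentiable ℝ f)
    (hf' : ∀ v : ℝ, κ * (1 + v ^ 4) ≤ deriv f v) :
    ∃ β : ℝ, 0 < β ∧ ∀ a b : ℝ,
      β * (1 + |a| + |b|) ^ 4 * (a - b) ^ 2 ≤ (f a - f b) * (a - b) := by
  set g : ℝ → ℝ := fun v => f v - κ * (v + v ^ 5 / 5) with hg_def
  have hg : ∀ v : ℝ, HasDerivAt g (deriv f v - κ * (1 + v ^ 4)) v := by
    intro v
    have h1 : HasDerivAt (fun v : ℝ => κ * (v + v ^ 5 / 5)) (κ * (1 + v ^ 4)) v := by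
      have : HasDerivAt (fun v : ℝ => κ * (v + v ^ 5 / 5)) (κ * (1 + ((5 : ℕ) : ℝ) * v ^ (5 - 1) / 5)) v :=
        ((hasDerivAt_id v).add ((hasDerivAt_pow 5 v).div_const 5)).const_mul κ
      convert this using 1
      ring
    exact ((hf v).hasDerivAt).sub h1
  have hgmono : Monotone g := by
    apply monotone_of_deriv_nonneg
    · exact fun v => (hg v).differentiableAt
    · intro v
      rw [(hg v).deriv]
      linarith [hf' v]
  refine ⟨κ / 270, by positivity, fun a b => ?_⟩
  have habs : (1 + |a| + |b|) ^ 4 ≤ 27 * (1 + a ^ 4 + b ^ 4) := by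
    have := aux_pow4 |a| |b| (abs_nonneg a) (abs_nonneg b)
    have ha4 : |a| ^ 4 = a ^ 4 := by rw [← abs_pow]; exact abs_of_nonneg (by positivity)
    have hb4 : |b| ^ 4 = b ^ 4 := by rw [← abs_pow]; exact abs_of_nonneg (by positivity)
    rwa [ha4, hb4] at this
  have h2 : (1 + a ^ 4 + b ^ 4) * (a - b) ^ 2 ≤
      10 * (((a - b) + (a ^ 5 - b ^ 5) / 5) * (a - b)) := by
    nlinarith [mul_nonneg (sq_nonneg (a - b)) (mul_nonneg (sq_nonneg (a + b))
      (by positivity : (0:ℝ) ≤ a ^ 2 + b ^ 2)), sq_nonneg (a - b)]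
  have hgprod : 0 ≤ (g a - g b) * (a - b) := by
    rcases le_total a b with h | h
    · have := hgmono h
      nlinarith
    · have := hgmono h
      nlinarith
  have key : κ / 270 * (1 + |a| + |b|) ^ 4 * (a - b) ^ 2 ≤
      κ * ((a - b) + (a ^ 5 - b ^ 5) / 5) * (a - b) := by
    calc κ / 270 * (1 + |a| + |b|) ^ 4 * (a - b) ^ 2
        ≤ κ / 270 * (27 * (1 + a ^ 4 + b ^ 4)) * (a - b) ^ 2 := by
          exact mul_le_mul_of_nonneg_right
            (mul_le_mul_of_nonneg_left habs (by positivity)) (sq_nonneg _)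
      _ = κ / 10 * ((1 + a ^ 4 + b ^ 4) * (a - b) ^ 2) := by ring
      _ ≤ κ / 10 * (10 * (((a - b) + (a ^ 5 - b ^ 5) / 5) * (a - b))) := by
          apply mul_le_mul_of_nonneg_left h2 (by positivity)
      _ = κ * ((a - b) + (a ^ 5 - b ^ 5) / 5) * (a - b) := by ring
  have hsplit : (f a - f b) * (a - b) =
      (g a - g b) * (a - b) + κ * ((a - b) + (a ^ 5 - b ^ 5) / 5) * (a - b) := by
    simp only [hg_def]
    ring
  rw [hsplit]
  clear hg_def hg hgmono
  clear_value g
  linarith [hgprod, key]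
end

section
/- Let β, C > 0 and L ≥ 0, and let f : ℝ → ℝ satisfy, for all a, b ∈ ℝ: (i) (f(a) − f(b))(a − b) ≥ β(1 + |a| + |b|)⁴(a − b)², (ii) |f(a) − f(b)| ≤ C(1 + |a| + |b|)⁴|a − b|, and (iii) |f(a)| ≤ C(1 + |a|⁵). Then there exists a constant C₁ > 0 (depending only on β, C and L) such that for all a, b ∈ ℝ, all r ≥ 0, and all ψ₁, ψ₂ ∈ [0,1] with |ψ₁ − ψ₂| ≤ L·r, the following lower bound holds: (ψ₁·f(a) − ψ₂·f(b))·(ψ₁·a − ψ₂·b) ≥ (β/2)·ψ₁²·(1 + |a| + |b|)⁴·(a − b)² − C₁·r²·(1 + |a|⁶ + |b|⁶). -/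
private lemma auxY (β c x y : ℝ) (hβ : 0 < β) :
    2 * c * x * y ≤ β / 2 * x ^ 2 + 2 * c ^ 2 / β * y ^ 2 := by
  have hkey : β / 2 * x ^ 2 + 2 * c ^ 2 / β * y ^ 2 - 2 * c * x * y
      = (β * x - 2 * c * y) ^ 2 / (2 * β) := by
    field_simp
    ring
  have : 0 ≤ (β * x - 2 * c * y) ^ 2 / (2 * β) := by positivity
  linarith

private lemma aux5 (x : ℝ) (hx : 0 ≤ x) : 1 + x ^ 5 ≤ (1 + x) ^ 5 := by
  nlinarith [pow_nonneg hx 2, pow_nonneg hx 3, pow_nonneg hx 4, hx]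

/-- Pointwise lower bound for the cut-off nonlinear term: under the quintic-type
coercivity and growth bounds (i)–(iii) on `f`, there is `C₁ > 0` such that for all
`a, b`, `r ≥ 0`, and `ψ₁, ψ₂ ∈ [0,1]` with `|ψ₁ − ψ₂| ≤ L r`,
`(ψ₁ f(a) − ψ₂ f(b))(ψ₁ a − ψ₂ b) ≥ (β/2) ψ₁² (1+|a|+|b|)⁴ (a−b)² − C₁ r² (1+|a|⁶+|b|⁶)`. -/
theorem stmt11 (β C L : ℝ) (hβ : 0 < β) (hC : 0 < C) (hL : 0 ≤ L) (f : ℝ → ℝ)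
    (h1 : ∀ a b : ℝ, β * (1 + |a| + |b|) ^ 4 * (a - b) ^ 2 ≤ (f a - f b) * (a - b))
    (h2 : ∀ a b : ℝ, |f a - f b| ≤ C * (1 + |a| + |b|) ^ 4 * |a - b|)
    (h3 : ∀ a : ℝ, |f a| ≤ C * (1 + |a| ^ 5)) :
    ∃ C₁ : ℝ, 0 < C₁ ∧ ∀ a b r ψ₁ ψ₂ : ℝ, 0 ≤ r →
      ψ₁ ∈ Set.Icc (0 : ℝ) 1 → ψ₂ ∈ Set.Icc (0 : ℝ) 1 → |ψ₁ - ψ₂| ≤ L * r →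
      β / 2 * ψ₁ ^ 2 * (1 + |a| + |b|) ^ 4 * (a - b) ^ 2 -
          C₁ * r ^ 2 * (1 + |a| ^ 6 + |b| ^ 6) ≤
        (ψ₁ * f a - ψ₂ * f b) * (ψ₁ * a - ψ₂ * b) := by
  refine ⟨729 * (2 * C ^ 2 * L ^ 2 / β + C * L ^ 2) + 1, by positivity, ?_⟩
  intro a b r ψ₁ ψ₂ hr hψ₁ hψ₂ hdle
  obtain ⟨hψ10, hψ11⟩ := hψ₁
  obtain ⟨hψ20, hψ21⟩ := hψ₂
  have ha : (0:ℝ) ≤ |a| := abs_nonneg a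
  have hb : (0:ℝ) ≤ |b| := abs_nonneg b
  set M : ℝ := 1 + |a| + |b| with hMdef
  set d : ℝ := ψ₁ - ψ₂ with hddef
  clear_value M d
  have hM1 : (1:ℝ) ≤ M := by simp only [hMdef]; linarith
  have hM0 : (0:ℝ) ≤ M := by linarith
  have hdabs : |d| ≤ L * r := hdle
  have hd0 : (0:ℝ) ≤ |d| := abs_nonneg d
  have hd2 : d ^ 2 ≤ L ^ 2 * r ^ 2 := by
    have := sq_abs d
    nlinarith [abs_nonneg d]
  -- M^6 ≤ 729 * (1 + |a|^6 + |b|^6)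
  set N : ℝ := 1 + |a| ^ 6 + |b| ^ 6 with hNdef
  clear_value N
  have hN0 : (0:ℝ) ≤ N := by rw [hNdef]; positivity
  have hM6 : M ^ 6 ≤ 729 * N := by
    set m : ℝ := max 1 (max |a| |b|) with hmdef
    have hm1 : (1:ℝ) ≤ m := le_max_left _ _
    have hma : |a| ≤ m := le_trans (le_max_left _ _) (le_max_right _ _)
    have hmb : |b| ≤ m := le_trans (le_max_right _ _) (le_max_right _ _)
    have hm0 : (0:ℝ) ≤ m := by linarith
    have hMle : M ≤ 3 * m := by simp only [hMdef]; linarith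
    have h6 : M ^ 6 ≤ (3 * m) ^ 6 := pow_le_pow_left₀ hM0 hMle 6
    have hm6 : m ^ 6 ≤ N := by
      rcases max_cases 1 (max |a| |b|) with ⟨he, _⟩ | ⟨he, _⟩
      · rw [hmdef, he]; simp only [hNdef]; nlinarith [pow_nonneg ha 6, pow_nonneg hb 6]
      · rcases max_cases |a| |b| with ⟨he2, _⟩ | ⟨he2, _⟩
        · rw [hmdef, he, he2]; simp only [hNdef]; nlinarith [pow_nonneg hb 6]
        · rw [hmdef, he, he2]; simp only [hNdef]; nlinarith [pow_nonneg ha 6]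
    have he : (3 * m) ^ 6 = 729 * m ^ 6 := by ring
    linarith
  -- |f b| ≤ C * M ^ 5
  have hfb : |f b| ≤ C * M ^ 5 := by
    have h5 : 1 + |b| ^ 5 ≤ M ^ 5 := by
      have h5a : 1 + |b| ^ 5 ≤ (1 + |b|) ^ 5 := aux5 |b| hb
      have h5b : (1 + |b|) ^ 5 ≤ M ^ 5 :=
        pow_le_pow_left₀ (by linarith) (by simp only [hMdef]; linarith) 5
      linarith
    calc |f b| ≤ C * (1 + |b| ^ 5) := h3 b
      _ ≤ C * M ^ 5 := mul_le_mul_of_nonneg_left h5 hC.le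
  -- expansion identity
  have hid : (ψ₁ * f a - ψ₂ * f b) * (ψ₁ * a - ψ₂ * b)
      = ψ₁ ^ 2 * ((f a - f b) * (a - b))
        + ψ₁ * d * ((f a - f b) * b + f b * (a - b))
        + d ^ 2 * (f b * b) := by
    simp only [hddef]; ring
  -- T1 bound
  have hT1 : β * ψ₁ ^ 2 * (M ^ 4 * (a - b) ^ 2) ≤ ψ₁ ^ 2 * ((f a - f b) * (a - b)) := by
    have h := mul_le_mul_of_nonneg_left (h1 a b) (sq_nonneg ψ₁)
    rw [← hMdef] at h
    linarith [h]
  -- cross term bound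
  have hX : |(f a - f b) * b + f b * (a - b)| ≤ 2 * C * M ^ 5 * |a - b| := by
    calc |(f a - f b) * b + f b * (a - b)|
        ≤ |(f a - f b) * b| + |f b * (a - b)| := abs_add_le _ _
      _ = |f a - f b| * |b| + |f b| * |a - b| := by rw [abs_mul, abs_mul]
      _ ≤ (C * M ^ 4 * |a - b|) * M + (C * M ^ 5) * |a - b| := by
          have h2' := h2 a b
          rw [← hMdef] at h2'
          have hbM : |b| ≤ M := by simp only [hMdef]; linarith
          have hab0 : (0:ℝ) ≤ |a - b| := abs_nonneg _
          have t1 : |f a - f b| * |b| ≤ (C * M ^ 4 * |a - b|) * M :=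
            mul_le_mul h2' hbM hb
              (mul_nonneg (mul_nonneg hC.le (pow_nonneg hM0 4)) (abs_nonneg _))
          have t2 : |f b| * |a - b| ≤ (C * M ^ 5) * |a - b| :=
            mul_le_mul_of_nonneg_right hfb hab0
          linarith
      _ = 2 * C * M ^ 5 * |a - b| := by ring
  have hab : |a - b| ^ 2 = (a - b) ^ 2 := sq_abs _
  have hT2 : -(β / 2 * ψ₁ ^ 2 * (M ^ 4 * (a - b) ^ 2)) - (2 * C ^ 2 / β) * (d ^ 2 * M ^ 6)
      ≤ ψ₁ * d * ((f a - f b) * b + f b * (a - b)) := by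
    set X : ℝ := (f a - f b) * b + f b * (a - b) with hXdef
    clear_value X
    have h1' : ψ₁ * d * X ≥ -(ψ₁ * |d| * |X|) := by
      have : |ψ₁ * d * X| = ψ₁ * |d| * |X| := by
        rw [abs_mul, abs_mul, abs_of_nonneg hψ10]
      linarith [neg_abs_le (ψ₁ * d * X), this.symm.le, this.le]
    have h2' : ψ₁ * |d| * |X| ≤ ψ₁ * |d| * (2 * C * M ^ 5 * |a - b|) := by
      have : (0:ℝ) ≤ ψ₁ * |d| := by positivity
      exact mul_le_mul_of_nonneg_left hX this
    -- Young: 2*C*ψ₁*|d|*M^5*|a-b| ≤ (β/2)*ψ₁^2*M^4*(a-b)^2 + (2C²/β)*d²*M^6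
    have hyoung : ψ₁ * |d| * (2 * C * M ^ 5 * |a - b|) ≤
        β / 2 * ψ₁ ^ 2 * (M ^ 4 * (a - b) ^ 2) + (2 * C ^ 2 / β) * (d ^ 2 * M ^ 6) := by
      calc ψ₁ * |d| * (2 * C * M ^ 5 * |a - b|)
          = 2 * C * (ψ₁ * M ^ 2 * |a - b|) * (|d| * M ^ 3) := by ring
        _ ≤ β / 2 * (ψ₁ * M ^ 2 * |a - b|) ^ 2 + 2 * C ^ 2 / β * (|d| * M ^ 3) ^ 2 :=
            auxY β C (ψ₁ * M ^ 2 * |a - b|) (|d| * M ^ 3) hβ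
        _ = β / 2 * ψ₁ ^ 2 * (M ^ 4 * (a - b) ^ 2) + (2 * C ^ 2 / β) * (d ^ 2 * M ^ 6) := by
            rw [mul_pow, mul_pow, mul_pow, sq_abs, sq_abs]
            ring
    linarith
  -- T3 bound
  have hT3 : -(C * (d ^ 2 * M ^ 6)) ≤ d ^ 2 * (f b * b) := by
    have habs : |f b * b| ≤ C * M ^ 6 := by
      rw [abs_mul]
      have hbM : |b| ≤ M := by simp only [hMdef]; linarith
      calc |f b| * |b| ≤ (C * M ^ 5) * M :=
          mul_le_mul hfb hbM hb (mul_nonneg hC.le (pow_nonneg hM0 5))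
        _ = C * M ^ 6 := by ring
    have h := mul_le_mul_of_nonneg_left (neg_abs_le (f b * b)) (sq_nonneg d)
    have h2 := mul_le_mul_of_nonneg_left habs (sq_nonneg d)
    have := abs_nonneg (f b * b)
    linarith [h, h2]
  -- combine
  have hQ : d ^ 2 * M ^ 6 ≤ L ^ 2 * r ^ 2 * (729 * N) := by
    have h1' : d ^ 2 * M ^ 6 ≤ (L ^ 2 * r ^ 2) * M ^ 6 :=
      mul_le_mul_of_nonneg_right hd2 (pow_nonneg hM0 6)
    have h2' : (L ^ 2 * r ^ 2) * M ^ 6 ≤ (L ^ 2 * r ^ 2) * (729 * N) :=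
      mul_le_mul_of_nonneg_left hM6 (by positivity)
    linarith
  have hrN : (0:ℝ) ≤ r ^ 2 * N := mul_nonneg (sq_nonneg r) hN0
  rw [hid]
  have hcoef : (2 * C ^ 2 / β) * (d ^ 2 * M ^ 6) + C * (d ^ 2 * M ^ 6)
      ≤ (729 * (2 * C ^ 2 * L ^ 2 / β + C * L ^ 2)) * (r ^ 2 * N) := by
    have hc1 : (0:ℝ) ≤ 2 * C ^ 2 / β := by positivity
    have k1 := mul_le_mul_of_nonneg_left hQ hc1
    have k2 := mul_le_mul_of_nonneg_left hQ hC.le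
    have e1 : (2 * C ^ 2 / β) * (L ^ 2 * r ^ 2 * (729 * N)) = (729 * (2 * C ^ 2 * L ^ 2 / β)) * (r ^ 2 * N) := by ring
    have e2 : C * (L ^ 2 * r ^ 2 * (729 * N)) = (729 * (C * L ^ 2)) * (r ^ 2 * N) := by ring
    have e3 : (729 * (2 * C ^ 2 * L ^ 2 / β + C * L ^ 2)) * (r ^ 2 * N) = (729 * (2 * C ^ 2 * L ^ 2 / β)) * (r ^ 2 * N) + (729 * (C * L ^ 2)) * (r ^ 2 * N) := by ring
    linarith
  linarith [hT1, hT2, hT3, hcoef, hrN]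
end
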